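/- Let A(s) be an n×n matrix over ℚ[s,s⁻¹] whose first row equals (s - s⁻¹)·(a₁₁, …, a₁ₙ) and whose first column below the (1,1)-entry equals (s - s⁻¹)·(a₂₁, …, aₙ₁)ᵀ, with integer aᵢⱼ, and whose lower-right (n-1)×(n-1) block Q(s) satisfies det Q(1) = 1. Then det A(s) is divisible by (s - s⁻¹), and (det A(s)/(s - s⁻¹)) evaluated at s = 1 equals a₁₁. -/

import Mathlib

open LaurentPolynomial

/-- Evaluation of a Laurent polynomial over ℚ at `s = 1`. -/
noncomputable def evalOneQ : LaurentPolynomial ℚ →+* ℚ :=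
  AddMonoidAlgebra.liftNCRingHom (RingHom.id ℚ) 1 (fun _ _ => Commute.all _ _)

lemma evalOneQ_single (m : ℤ) (r : ℚ) : evalOneQ (AddMonoidAlgebra.single m r) = r := by
  show AddMonoidAlgebra.liftNC (RingHom.id ℚ).toAddMonoidHom (1 : Multiplicative ℤ →* ℚ)
      (AddMonoidAlgebra.single m r) = r
  rw [AddMonoidAlgebra.liftNC_single]
  simp

lemma evalOneQ_C (r : ℚ) : evalOneQ (C r) = r := evalOneQ_single 0 r
lemma evalOneQ_T (m : ℤ) : evalOneQ (T m) = 1 := evalOneQ_single m 1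

/-- If the first row of `A(s)` is `(s - s⁻¹)·(a₀₀,…,a₀ₙ)`, the first column
below the corner is `(s - s⁻¹)·(a₁₀,…,aₙ₀)`, with integer `aᵢⱼ`, and the
lower-right block `Q(s)` satisfies `det Q(1) = 1`, then `det A` is divisible by
`s - s⁻¹`, and `(det A / (s - s⁻¹))` evaluated at `s = 1` equals `a₀₀`. -/
theorem det_div_s_sub_sinv_eval {n : ℕ}
    (A : Matrix (Fin (n + 1)) (Fin (n + 1)) (LaurentPolynomial ℚ))
    (a : Fin (n + 1) → Fin (n + 1) → ℤ)
    (hrow : ∀ j, A 0 j = (T 1 - T (-1)) * C ((a 0 j : ℚ)))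
    (hcol : ∀ i : Fin n, A i.succ 0 = (T 1 - T (-1)) * C ((a i.succ 0 : ℚ)))
    (hQ : ((A.submatrix Fin.succ Fin.succ).map evalOneQ).det = 1) :
    ∃ D : LaurentPolynomial ℚ,
      A.det = (T 1 - T (-1)) * D ∧ evalOneQ D = (a 0 0 : ℚ) := by
  refine ⟨∑ j : Fin (n+1), (-1)^(j:ℕ) * C ((a 0 j : ℚ)) *
      (A.submatrix Fin.succ j.succAbove).det, ?_, ?_⟩
  · rw [Matrix.det_succ_row_zero, Finset.mul_sum]
    refine Finset.sum_congr rfl fun j _ => ?_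
    rw [hrow j]; ring
  · rw [map_sum, Fin.sum_univ_succ]
    have h0 : evalOneQ ((-1)^((0 : Fin (n+1)):ℕ) * C ((a 0 0 : ℚ)) *
        (A.submatrix Fin.succ (Fin.succAbove 0)).det) = (a 0 0 : ℚ) := by
      rw [map_mul, map_mul, evalOneQ_C, RingHom.map_det]
      simp [Fin.succAbove_zero, hQ]
    rw [h0]
    have hz : ∀ i : Fin n, evalOneQ ((-1)^((i.succ : Fin (n+1)):ℕ) * C ((a 0 i.succ : ℚ)) *
        (A.submatrix Fin.succ i.succ.succAbove).det) = 0 := by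
      intro i
      haveI : NeZero n := ⟨i.pos.ne'⟩
      rw [map_mul, RingHom.map_det]
      have : ((A.submatrix Fin.succ i.succ.succAbove).map evalOneQ).det = 0 := by
        apply Matrix.det_eq_zero_of_column_eq_zero 0
        intro k
        simp only [Matrix.map_apply, Matrix.submatrix_apply, Fin.succ_succAbove_zero]
        rw [hcol k, map_mul, map_sub, evalOneQ_T, evalOneQ_T]
        ring
      rw [RingHom.mapMatrix_apply, this, mul_zero]
    simp only [hz, Finset.sum_const_zero, add_zero]
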